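/- Let A = [A11, A12; A21, A22] and H be like-sized self-adjoint block 2×2 complex matrices with A11 an invertible square matrix. Let Z denote the block 2×2 matrix Z = [A11⁻¹, −A11⁻¹A12; 0, I]. Then the directional derivative of PPT at A in direction H exists and equals Zᴴ H Z; that is, the map t ↦ PPT(A + tH) is differentiable at t = 0 with derivative (d/dt) PPT(A + tH)|_{t=0} = Zᴴ H Z. -/

import Mathlib

open Matrix

attribute [local instance] Matrix.frobeniusNormedAddCommGroup Matrix.frobeniusNormedSpace

set_option maxHeartbeats 2000000

section aux

attribute [local instance] Matrix.frobeniusNormedRing Matrix.frobeniusNormedAlgebra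

variable {p q r : Type*} [Fintype p] [Fintype q] [Fintype r]

section frob

noncomputable abbrev frobTop {p q : Type*} [Fintype p] [Fintype q] : TopologicalSpace (Matrix p q ℂ) :=
  (Matrix.frobeniusNormedAddCommGroup : NormedAddCommGroup (Matrix p q ℂ)).toUniformSpace.toTopologicalSpace

attribute [local instance] frobTop

/-- Matrix multiplication as a continuous bilinear map. -/
noncomputable def matMulCLM :
    Matrix p q ℂ →L[ℝ] Matrix q r ℂ →L[ℝ] Matrix p r ℂ :=
  LinearMap.toContinuousLinearMap
    { toFun := fun X => LinearMap.toContinuousLinearMap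
        { toFun := fun Y => X * Y
          map_add' := fun Y Z => Matrix.mul_add X Y Z
          map_smul' := fun c Y => Matrix.mul_smul X c Y }
      map_add' := fun X X' => by
        apply ContinuousLinearMap.ext; intro Y
        simp [Matrix.add_mul]
      map_smul' := fun c X => by
        apply ContinuousLinearMap.ext; intro Y
        simp [Matrix.smul_mul] }

@[simp] lemma matMulCLM_apply (X : Matrix p q ℂ) (Y : Matrix q r ℂ) :
    matMulCLM X Y = X * Y := rfl

theorem HasDerivAt.matmul {f : ℝ → Matrix p q ℂ} {g : ℝ → Matrix q r ℂ}
    {f' : Matrix p q ℂ} {g' : Matrix q r ℂ} {x : ℝ}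
    (hf : HasDerivAt f f' x) (hg : HasDerivAt g g' x) :
    HasDerivAt (fun t => f t * g t) (f' * g x + f x * g') x := by
  have h1 : HasDerivAt (fun t => (matMulCLM : Matrix p q ℂ →L[ℝ] Matrix q r ℂ →L[ℝ] Matrix p r ℂ) (f t)) (matMulCLM f') x :=
    ((matMulCLM : Matrix p q ℂ →L[ℝ] Matrix q r ℂ →L[ℝ] Matrix p r ℂ).hasFDerivAt).comp_hasDerivAt x hf
  simpa using h1.clm_apply hg

end frob

variable {n₁ n₂ m₁ m₂ : Type*} [Fintype n₁] [Fintype n₂] [Fintype m₁] [Fintype m₂]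

noncomputable def fbCLM₁₁ : Matrix n₁ m₁ ℂ →L[ℝ] Matrix (n₁ ⊕ n₂) (m₁ ⊕ m₂) ℂ :=
  LinearMap.toContinuousLinearMap
    { toFun := fun W => Matrix.fromBlocks W 0 0 0
      map_add' := fun W W' => by rw [Matrix.fromBlocks_add]; simp
      map_smul' := fun c W => by rw [RingHom.id_apply, Matrix.fromBlocks_smul]; simp }

noncomputable def fbCLM₁₂ : Matrix n₁ m₂ ℂ →L[ℝ] Matrix (n₁ ⊕ n₂) (m₁ ⊕ m₂) ℂ :=
  LinearMap.toContinuousLinearMap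
    { toFun := fun W => Matrix.fromBlocks 0 W 0 0
      map_add' := fun W W' => by rw [Matrix.fromBlocks_add]; simp
      map_smul' := fun c W => by rw [RingHom.id_apply, Matrix.fromBlocks_smul]; simp }

noncomputable def fbCLM₂₁ : Matrix n₂ m₁ ℂ →L[ℝ] Matrix (n₁ ⊕ n₂) (m₁ ⊕ m₂) ℂ :=
  LinearMap.toContinuousLinearMap
    { toFun := fun W => Matrix.fromBlocks 0 0 W 0
      map_add' := fun W W' => by rw [Matrix.fromBlocks_add]; simp
      map_smul' := fun c W => by rw [RingHom.id_apply, Matrix.fromBlocks_smul]; simp }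

noncomputable def fbCLM₂₂ : Matrix n₂ m₂ ℂ →L[ℝ] Matrix (n₁ ⊕ n₂) (m₁ ⊕ m₂) ℂ :=
  LinearMap.toContinuousLinearMap
    { toFun := fun W => Matrix.fromBlocks 0 0 0 W
      map_add' := fun W W' => by rw [Matrix.fromBlocks_add]; simp
      map_smul' := fun c W => by rw [RingHom.id_apply, Matrix.fromBlocks_smul]; simp }

theorem hasDerivAt_fromBlocks {f11 : ℝ → Matrix n₁ m₁ ℂ} {f12 : ℝ → Matrix n₁ m₂ ℂ}
    {f21 : ℝ → Matrix n₂ m₁ ℂ} {f22 : ℝ → Matrix n₂ m₂ ℂ}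
    {d11 : Matrix n₁ m₁ ℂ} {d12 : Matrix n₁ m₂ ℂ} {d21 : Matrix n₂ m₁ ℂ} {d22 : Matrix n₂ m₂ ℂ}
    {x : ℝ} (h11 : HasDerivAt f11 d11 x) (h12 : HasDerivAt f12 d12 x)
    (h21 : HasDerivAt f21 d21 x) (h22 : HasDerivAt f22 d22 x) :
    HasDerivAt (fun t => Matrix.fromBlocks (f11 t) (f12 t) (f21 t) (f22 t))
      (Matrix.fromBlocks d11 d12 d21 d22) x := by
  have h := ((((fbCLM₁₁ (n₂ := n₂) (m₂ := m₂)).hasFDerivAt.comp_hasDerivAt x h11).add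
    ((fbCLM₁₂ (n₂ := n₂) (m₁ := m₁)).hasFDerivAt.comp_hasDerivAt x h12)).add
    ((fbCLM₂₁ (n₁ := n₁) (m₂ := m₂)).hasFDerivAt.comp_hasDerivAt x h21)).add
    ((fbCLM₂₂ (n₁ := n₁) (m₁ := m₁)).hasFDerivAt.comp_hasDerivAt x h22)
  have key : ∀ (W : Matrix n₁ m₁ ℂ) (X : Matrix n₁ m₂ ℂ) (Y : Matrix n₂ m₁ ℂ)
      (Z : Matrix n₂ m₂ ℂ), fbCLM₁₁ W + fbCLM₁₂ X + fbCLM₂₁ Y + fbCLM₂₂ Z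
        = Matrix.fromBlocks W X Y Z := by
    intro W X Y Z
    simp only [fbCLM₁₁, fbCLM₁₂, fbCLM₂₁, fbCLM₂₂, LinearMap.coe_toContinuousLinearMap',
      LinearMap.coe_mk, AddHom.coe_mk, Matrix.fromBlocks_add]
    simp
  simp only [Function.comp_def, key] at h
  exact (h.congr_deriv (key _ _ _ _)).congr_of_eventuallyEq
    (Filter.Eventually.of_forall fun t => (key _ _ _ _).symm)

end aux

/-- The principal pivot transform of a block 2×2 matrix
`A = [A11, A12; A21, A22]` with `A11` an invertible square block:
`PPT(A) = [−A11⁻¹, A11⁻¹A12; A21A11⁻¹, A22 − A21A11⁻¹A12]`. -/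
noncomputable def PPT {n m : ℕ} (A : Matrix (Fin n ⊕ Fin m) (Fin n ⊕ Fin m) ℂ) :
    Matrix (Fin n ⊕ Fin m) (Fin n ⊕ Fin m) ℂ :=
  Matrix.fromBlocks (-(A.toBlocks₁₁)⁻¹) ((A.toBlocks₁₁)⁻¹ * A.toBlocks₁₂)
    (A.toBlocks₂₁ * (A.toBlocks₁₁)⁻¹)
    (A.toBlocks₂₂ - A.toBlocks₂₁ * (A.toBlocks₁₁)⁻¹ * A.toBlocks₁₂)

section main

attribute [local instance] Matrix.frobeniusNormedRing Matrix.frobeniusNormedAlgebra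

theorem ppt_hasDerivAt {n m : ℕ}
    (A H : Matrix (Fin n ⊕ Fin m) (Fin n ⊕ Fin m) ℂ)
    (hA : A.IsHermitian) (hH : H.IsHermitian)
    (hA11 : IsUnit A.toBlocks₁₁) :
    HasDerivAt (fun t : ℝ => PPT (A + (t : ℂ) • H))
      ((Matrix.fromBlocks (A.toBlocks₁₁)⁻¹ (-((A.toBlocks₁₁)⁻¹ * A.toBlocks₁₂)) 0 1)ᴴ *
        H * Matrix.fromBlocks (A.toBlocks₁₁)⁻¹ (-((A.toBlocks₁₁)⁻¹ * A.toBlocks₁₂)) 0 1)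
      0 := by
  set B := A.toBlocks₁₁ with hBdef
  set A12 := A.toBlocks₁₂
  set A21 := A.toBlocks₂₁
  set A22 := A.toBlocks₂₂
  set H11 := H.toBlocks₁₁
  set H12 := H.toBlocks₁₂
  set H21 := H.toBlocks₂₁
  set H22 := H.toBlocks₂₂
  -- linear paths
  have path : ∀ {p q : Type} [Fintype p] [Fintype q]
      (C D : Matrix p q ℂ), HasDerivAt (fun t : ℝ => C + (t:ℂ) • D) D 0 := by
    intro p q _ _ C D
    have : ∀ t : ℝ, C + (t:ℂ) • D = C + t • D := by
      intro t; rw [Complex.coe_smul]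
    simp only [this]
    exact (((hasDerivAt_id (0:ℝ)).smul_const D).const_add C).congr_deriv (by simp)
  have h11 := path B H11
  have h12 := path A12 H12
  have h21 := path A21 H21
  have h22 := path A22 H22
  -- inverse path
  have hU : HasDerivAt (fun t : ℝ => (B + (t:ℂ) • H11)⁻¹) (-(B⁻¹ * H11 * B⁻¹)) 0 := by
    have h0 : B + ((0:ℝ):ℂ) • H11 = B := by simp
    have hf : HasFDerivAt Ring.inverse
        (-ContinuousLinearMap.mulLeftRight ℝ _ (↑hA11.unit⁻¹) (↑hA11.unit⁻¹))
        ((fun t : ℝ => B + (t:ℂ) • H11) 0) := by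
      rw [show ((fun t : ℝ => B + (t:ℂ) • H11) 0) = B by simp]
      exact hasFDerivAt_ringInverse (𝕜 := ℝ) hA11.unit
    have hcomp := hf.comp_hasDerivAt 0 h11
    simp only [Function.comp_def, ← Matrix.nonsing_inv_eq_ringInverse] at hcomp
    simp [hA11.unit_spec] at hcomp
    exact hcomp
  -- block derivatives
  have hd11 : HasDerivAt (fun t : ℝ => -(B + (t:ℂ) • H11)⁻¹) (B⁻¹ * H11 * B⁻¹) 0 := by
    exact hU.neg.congr_deriv (by simp)
  have hd12 : HasDerivAt (fun t : ℝ => (B + (t:ℂ) • H11)⁻¹ * (A12 + (t:ℂ) • H12))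
      (-(B⁻¹ * H11 * B⁻¹) * A12 + B⁻¹ * H12) 0 := by
    exact (hU.matmul h12).congr_deriv (by simp)
  have hd21 : HasDerivAt (fun t : ℝ => (A21 + (t:ℂ) • H21) * (B + (t:ℂ) • H11)⁻¹)
      (H21 * B⁻¹ + A21 * -(B⁻¹ * H11 * B⁻¹)) 0 := by
    exact (h21.matmul hU).congr_deriv (by simp)
  have hd22 : HasDerivAt (fun t : ℝ => (A22 + (t:ℂ) • H22) -
      (A21 + (t:ℂ) • H21) * (B + (t:ℂ) • H11)⁻¹ * (A12 + (t:ℂ) • H12))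
      (H22 - ((H21 * B⁻¹ + A21 * -(B⁻¹ * H11 * B⁻¹)) * A12 + A21 * B⁻¹ * H12)) 0 := by
    have := h22.sub ((h21.matmul hU).matmul h12)
    exact this.congr_deriv (by simp)
  have hblocks := hasDerivAt_fromBlocks hd11 hd12 hd21 hd22
  -- the function coincides
  have hfun : (fun t : ℝ => PPT (A + (t:ℂ) • H)) = (fun t : ℝ =>
      Matrix.fromBlocks (-(B + (t:ℂ) • H11)⁻¹)
        ((B + (t:ℂ) • H11)⁻¹ * (A12 + (t:ℂ) • H12))
        ((A21 + (t:ℂ) • H21) * (B + (t:ℂ) • H11)⁻¹)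
        ((A22 + (t:ℂ) • H22) -
          (A21 + (t:ℂ) • H21) * (B + (t:ℂ) • H11)⁻¹ * (A12 + (t:ℂ) • H12))) := rfl
  rw [hfun]
  convert hblocks using 1
  -- hermitian facts
  have hBH : Bᴴ = B := by
    ext i j
    simpa [B, Matrix.toBlocks₁₁, Matrix.conjTranspose_apply] using
      congrFun (congrFun hA (Sum.inl i)) (Sum.inl j)
  have h12H : A12ᴴ = A21 := by
    ext i j
    simpa [A12, A21, Matrix.toBlocks₁₂, Matrix.toBlocks₂₁, Matrix.conjTranspose_apply] using
      congrFun (congrFun hA (Sum.inr i)) (Sum.inl j)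
  have hinvH : (B⁻¹)ᴴ = B⁻¹ := by
    rw [Matrix.conjTranspose_nonsing_inv, hBH]
  have hZ : (Matrix.fromBlocks B⁻¹ (-(B⁻¹ * A12)) (0 : Matrix (Fin m) (Fin n) ℂ)
      (1 : Matrix (Fin m) (Fin m) ℂ))ᴴ
      = Matrix.fromBlocks B⁻¹ 0 (-(A21 * B⁻¹)) 1 := by
    rw [Matrix.fromBlocks_conjTranspose, hinvH, Matrix.conjTranspose_neg,
      Matrix.conjTranspose_mul, h12H, hinvH, Matrix.conjTranspose_zero,
      Matrix.conjTranspose_one]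
  rw [hZ, ← Matrix.fromBlocks_toBlocks H, Matrix.fromBlocks_multiply,
    Matrix.fromBlocks_multiply]
  rw [Matrix.fromBlocks_inj]
  refine ⟨?_, ?_, ?_, ?_⟩ <;>
    · simp only [Matrix.zero_mul, Matrix.mul_zero, Matrix.one_mul, Matrix.mul_one,
        Matrix.neg_mul, Matrix.mul_neg, Matrix.add_mul, Matrix.mul_add, neg_neg,
        add_zero, zero_add, Matrix.mul_assoc, sub_eq_add_neg, neg_add]
      try abel

end main
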